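/- Let C be a category with all small colimits. Then the category Prod(C) of formal products of objects of C has all small colimits. -/

import Mathlib

open CategoryTheory Limits

universe v u

/-- The category of formal products of objects of `C`. -/
structure FormalProd (C : Type u) [Category.{v} C] : Type (max u (v + 1)) where
  ι : Type v
  obj : ι → C

namespace FormalProd

variable {C : Type u} [Category.{v} C]

instance : Category.{v} (FormalProd C) where
  Hom A B := Σ r : B.ι → A.ι, ∀ j : B.ι, A.obj (r j) ⟶ B.obj j
  id A := ⟨fun i => i, fun i => 𝟙 (A.obj i)⟩
  comp {A B D} f g := ⟨fun k => f.1 (g.1 k), fun k => f.2 (g.1 k) ≫ g.2 k⟩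
  id_comp f := by obtain ⟨r, φ⟩ := f; simp
  comp_id f := by obtain ⟨r, φ⟩ := f; simp
  assoc f g h := by simp

/-- The index map of a morphism of formal products. -/
def Hom.index {A B : FormalProd C} (f : A ⟶ B) : B.ι → A.ι := f.1

/-- The components of a morphism of formal products. -/
def Hom.component {A B : FormalProd C} (f : A ⟶ B) (j : B.ι) :
    A.obj (Hom.index f j) ⟶ B.obj j := f.2 j

end FormalProd

namespace FormalProdColim

open FormalProd

variable {C : Type u} [Category.{v} C]

@[simp] lemma id_fst (A : FormalProd C) : (𝟙 A : A ⟶ A).1 = fun i => i := rfl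
@[simp] lemma id_snd (A : FormalProd C) (i : A.ι) : (𝟙 A : A ⟶ A).2 i = 𝟙 (A.obj i) := rfl
@[simp] lemma comp_fst {A B D : FormalProd C} (f : A ⟶ B) (g : B ⟶ D) (k : D.ι) :
    (f ≫ g).1 k = f.1 (g.1 k) := rfl
@[simp] lemma comp_snd {A B D : FormalProd C} (f : A ⟶ B) (g : B ⟶ D) (k : D.ι) :
    (f ≫ g).2 k = f.2 (g.1 k) ≫ g.2 k := rfl

lemma snd_congr {A B : FormalProd C} (f : A ⟶ B) {i i' : B.ι} (e : i = i') :
    f.2 i = eqToHom (by rw [e]) ≫ f.2 i' ≫ eqToHom (by rw [e]) := by subst e; simp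

lemma eq_snd {A B : FormalProd C} {f g : A ⟶ B} (h : f = g) (k : B.ι) :
    f.2 k = eqToHom (by rw [h]) ≫ g.2 k := by subst h; simp

lemma hom_ext {A B : FormalProd C} (f g : A ⟶ B) (h : f.1 = g.1)
    (h2 : ∀ k, f.2 k = eqToHom (by rw [h]) ≫ g.2 k) : f = g := by
  obtain ⟨fi, fc⟩ := f
  obtain ⟨gi, gc⟩ := g
  dsimp at h
  subst h
  simp only [eqToHom_refl, Category.id_comp] at h2
  exact congrArg _ (funext h2)

lemma eqToHom_aux1 {A B D E : C} (p : A = B) (q : B = A) (f : A ⟶ D) (g : D ⟶ E) :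
    f ≫ g = eqToHom p ≫ ((eqToHom q ≫ f) ≫ g) ≫ 𝟙 E := by subst p; simp

lemma eqToHom_aux2 {A B D : C} (p : A = B) (q : B = A) (f : A ⟶ D) :
    eqToHom p ≫ eqToHom q ≫ f = f ≫ 𝟙 D := by subst p; simp

variable [HasColimits C] {J : Type v} [Category.{v} J] (F : J ⥤ FormalProd C)

/-- Sections of the index functor. -/
def Sect : Type v :=
  { s : ∀ j, (F.obj j).ι // ∀ ⦃j j' : J⦄ (u : j ⟶ j'), (F.map u).1 (s j') = s j }

/-- The diagram in `C` determined by a section. -/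
def diag (s : Sect F) : J ⥤ C where
  obj j := (F.obj j).obj (s.1 j)
  map {j j'} u := eqToHom (by rw [s.2 u]) ≫ (F.map u).2 (s.1 j')
  map_id j := by
    rw [eq_snd (F.map_id j)]
    simp
  map_comp {j j' j''} u v := by
    rw [eq_snd (F.map_comp u v)]
    simp only [comp_snd]
    rw [snd_congr (F.map u) (s.2 v)]
    simp [eqToHom_trans_assoc]

@[simp] lemma diag_map {s : Sect F} {j j' : J} (u : j ⟶ j') :
    (diag F s).map u = eqToHom (by dsimp [diag]; rw [s.2 u]) ≫ (F.map u).2 (s.1 j') := rfl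

/-- The colimit cocone. -/
noncomputable def theCocone : Cocone F where
  pt := ⟨Sect F, fun s => colimit (diag F s)⟩
  ι :=
    { app := fun j => ⟨fun s => s.1 j, fun s => colimit.ι (diag F s) j⟩
      naturality := fun j j' u => by
        refine hom_ext _ _ (funext fun s => s.2 u) fun s => ?_
        have h := colimit.w (diag F s) u
        rw [diag_map] at h
        simp only [comp_snd, id_fst, id_snd, Functor.const_obj_map, Category.comp_id]
        rw [← h]
        exact eqToHom_aux1 _ _ _ _ }

variable {F}

/-- The section determined by a cocone and an index of its point. -/
def descSect (c : Cocone F) (k : c.pt.ι) : Sect F :=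
  ⟨fun j => (c.ι.app j).1 k, fun j j' u =>
    congrFun (congrArg Sigma.fst (c.w u)) k⟩

/-- The cocone in `C` at index `k`. -/
def descCocone (c : Cocone F) (k : c.pt.ι) : Cocone (diag F (descSect c k)) where
  pt := c.pt.obj k
  ι :=
    { app := fun j => (c.ι.app j).2 k
      naturality := fun j j' u => by
        have h := eq_snd (c.w u) k
        simp only [comp_snd] at h
        simp only [diag_map, Functor.const_obj_obj, Functor.const_obj_map,
          Category.comp_id, Category.assoc, descSect]
        change (eqToHom _ ≫ (F.map u).2 _) ≫ _ = _
        rw [Category.assoc, h]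
        exact eqToHom_aux2 _ _ _ }

/-- The descent morphism. -/
noncomputable def descHom (c : Cocone F) : (theCocone F).pt ⟶ c.pt :=
  ⟨descSect c, fun k => colimit.desc _ (descCocone c k)⟩

noncomputable def isColimitTheCocone : IsColimit (theCocone F) where
  desc c := descHom c
  fac c j := by
    refine hom_ext _ _ rfl fun k => ?_
    simp only [eqToHom_refl, Category.id_comp, comp_snd, theCocone, descHom]
    exact (colimit.ι_desc (descCocone c k) j).trans (Category.id_comp _).symm
  uniq c m hm := by
    obtain ⟨mi, mc⟩ := m
    have hmi : mi = descSect c := by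
      funext k
      apply Subtype.ext
      funext j
      exact congrFun (congrArg Sigma.fst (hm j)) k
    subst hmi
    show _ = descHom c
    refine hom_ext _ _ rfl fun k => ?_
    simp only [eqToHom_refl, Category.id_comp, descHom]
    apply colimit.hom_ext
    intro j
    erw [Category.id_comp, colimit.ι_desc]
    have h := eq_snd (hm j) k
    simp only [comp_snd, theCocone] at h
    exact h.trans (Category.id_comp _)

end FormalProdColim

/-- If `C` has all small colimits, then the category `Prod(C)` of formal products of
objects of `C` has all small colimits. -/
theorem formalProd_hasColimits (C : Type u) [Category.{v} C] [HasColimits C] :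
    HasColimits (FormalProd C) := by
  exact ⟨fun J _ => ⟨fun F => HasColimit.mk ⟨_, FormalProdColim.isColimitTheCocone (F := F)⟩⟩⟩
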